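/- Let α > 0 and a, b ≥ 0. Then ∫₀¹ ∫₀¹ [(a s₁ + b s₂)^α − |a s₁ − b s₂|^α] / (s₁ s₂) ds₁ ds₂ ≥ C_α · min(a^α, b^α), where C_α = (2/α) ∫₀¹ [(1+u)^α − (1−u)^α]/u du. -/

import Mathlib

open MeasureTheory Set

-- MVT-type bound for α ≥ 1
lemma rpow_sub_rpow_le {α u v : ℝ} (hα : 1 ≤ α) (hu : 0 ≤ u) (huv : u ≤ v) :
    v ^ α - u ^ α ≤ α * v ^ (α - 1) * (v - u) := by
  have hv : 0 ≤ v := hu.trans huv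
  rcases eq_or_lt_of_le hv with hv0 | hv0
  · have hu0 : u = 0 := le_antisymm (huv.trans hv0.ge) hu
    simp [← hv0, hu0, Real.zero_rpow (by positivity : α ≠ 0)]
  · set t := u / v with ht
    have ht0 : 0 ≤ t := by positivity
    have key : 1 + α * (t - 1) ≤ t ^ α := by
      have := one_add_mul_self_le_rpow_one_add (s := t - 1) (by linarith) hα
      simpa using this
    have htα : t ^ α = u ^ α / v ^ α := Real.div_rpow hu hv _
    rw [htα] at key
    have hvα : 0 < v ^ α := Real.rpow_pos_of_pos hv0 _
    have hvα1 : v ^ (α - 1) = v ^ α / v := Real.rpow_sub_one hv0.ne' α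
    -- multiply key by v^α
    have key2 : v ^ α + α * (t - 1) * v ^ α ≤ u ^ α := by
      have := mul_le_mul_of_nonneg_right key hvα.le
      rw [add_mul, one_mul, div_mul_cancel₀ _ hvα.ne'] at this
      linarith
    have : α * (t - 1) * v ^ α = α * (v ^ α / v) * (u - v) := by
      field_simp [ht]
      rw [ht, sub_mul, div_mul_cancel₀ _ hv0.ne', one_mul]
    rw [hvα1]
    nlinarith [key2, this]

-- subadditivity-type bound for α ≤ 1
lemma rpow_sub_rpow_le' {α u v : ℝ} (hα0 : 0 < α) (hα : α ≤ 1) (hu : 0 ≤ u) (huv : u ≤ v) :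
    v ^ α - u ^ α ≤ (v - u) ^ α := by
  have hv : 0 ≤ v := hu.trans huv
  rcases eq_or_lt_of_le hv with hv0 | hv0
  · have hu0 : u = 0 := le_antisymm (huv.trans hv0.ge) hu
    simp [← hv0, hu0, Real.zero_rpow (by positivity : α ≠ 0)]
  · rcases eq_or_lt_of_le huv with rfl | huv'
    · simp
      exact Real.rpow_nonneg le_rfl α
    · -- show v^α ≤ u^α + (v-u)^α by dividing by v^α
      have h1 : u / v + (v - u) / v = 1 := by field_simp; ring
      have h2 : u / v ≤ (u / v) ^ α := by
        rcases eq_or_lt_of_le hu with hu0 | hu0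
        · simp [← hu0]; positivity
        · calc u / v = (u / v) ^ (1:ℝ) := by rw [Real.rpow_one]
            _ ≤ (u / v) ^ α := Real.rpow_le_rpow_of_exponent_ge (by positivity)
                (by rw [div_le_one hv0]; exact huv) hα
      have h3 : (v - u) / v ≤ ((v - u) / v) ^ α := by
        calc (v - u) / v = ((v - u) / v) ^ (1:ℝ) := by rw [Real.rpow_one]
          _ ≤ ((v - u) / v) ^ α := Real.rpow_le_rpow_of_exponent_ge (div_pos (by linarith) hv0)
              (by rw [div_le_one hv0]; linarith) hα
      have h4 : (1:ℝ) ≤ (u / v) ^ α + ((v - u) / v) ^ α := by linarith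
      have h5 : (u / v) ^ α = u ^ α / v ^ α := Real.div_rpow hu hv _
      have h6 : ((v - u) / v) ^ α = (v - u) ^ α / v ^ α := Real.div_rpow (by linarith) hv _
      have hvα : 0 < v ^ α := Real.rpow_pos_of_pos hv0 _
      rw [h5, h6] at h4
      have := mul_le_mul_of_nonneg_right h4 hvα.le
      rw [one_mul, add_mul, div_mul_cancel₀ _ hvα.ne', div_mul_cancel₀ _ hvα.ne'] at this
      linarith

lemma min_rpow_le {x y q : ℝ} (hy : 0 ≤ y) (hxy : y ≤ x) (hq : 0 < q) :
    y ^ q ≤ (x * y) ^ (q / 2) := by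
  have h1 : (y * y) ^ (q / 2) = y ^ q := by
    rw [Real.mul_rpow hy hy, ← Real.rpow_add' hy (by positivity)]
    norm_num
  rw [← h1]
  exact Real.rpow_le_rpow (by positivity) (mul_le_mul_of_nonneg_right hxy hy) (by positivity)

lemma G_nonneg {α x y : ℝ} (hα : 0 < α) (hx : 0 ≤ x) (hy : 0 ≤ y) :
    0 ≤ (x + y) ^ α - |x - y| ^ α := by
  have h1 : |x - y| ≤ x + y := by
    rw [abs_le]; constructor <;> linarith
  have := Real.rpow_le_rpow (abs_nonneg _) h1 hα.le
  linarith

lemma G_bound_core {α x y : ℝ} (hα : 0 < α) (hy : 0 ≤ y) (hxy : y ≤ x) :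
    (x + y) ^ α - |x - y| ^ α ≤
      (2 ^ α + 2 * α) * ((x + y) ^ (α - min α 1) * (x * y) ^ (min α 1 / 2)) := by
  have hx : 0 ≤ x := hy.trans hxy
  have habs : |x - y| = x - y := abs_of_nonneg (by linarith)
  have h2α : (0:ℝ) < 2 ^ α := Real.rpow_pos_of_pos (by norm_num) α
  rcases le_total α 1 with h1 | h1
  · rw [min_eq_left h1, sub_self, Real.rpow_zero, one_mul]
    have key : (x + y) ^ α - (x - y) ^ α ≤ (2 * y) ^ α := by
      have := rpow_sub_rpow_le' hα h1 (u := x - y) (v := x + y) (by linarith) (by linarith)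
      have e : x + y - (x - y) = 2 * y := by ring
      rwa [e] at this
    have e2 : (2 * y) ^ α = 2 ^ α * y ^ α := Real.mul_rpow (by norm_num) hy
    have e3 : y ^ α ≤ (x * y) ^ (α / 2) := min_rpow_le hy hxy hα
    have hrn : (0:ℝ) ≤ (x * y) ^ (α / 2) := Real.rpow_nonneg (by positivity) _
    rw [habs]
    calc (x + y) ^ α - (x - y) ^ α ≤ 2 ^ α * y ^ α := by rw [← e2]; exact key
      _ ≤ 2 ^ α * (x * y) ^ (α / 2) := by nlinarith
      _ ≤ (2 ^ α + 2 * α) * (x * y) ^ (α / 2) := by nlinarith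
  · rw [min_eq_right h1]
    have key : (x + y) ^ α - (x - y) ^ α ≤ α * (x + y) ^ (α - 1) * (2 * y) := by
      have := rpow_sub_rpow_le (u := x - y) (v := x + y) h1 (by linarith) (by linarith)
      have e : x + y - (x - y) = 2 * y := by ring
      rwa [e] at this
    have e3 : y ≤ (x * y) ^ ((1:ℝ) / 2) := by
      have := min_rpow_le hy hxy one_pos
      rwa [Real.rpow_one] at this
    have hp : (0:ℝ) ≤ (x + y) ^ (α - 1) := Real.rpow_nonneg (by linarith) _
    rw [habs]
    calc (x + y) ^ α - (x - y) ^ α ≤ α * (x + y) ^ (α - 1) * (2 * y) := key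
      _ = 2 * α * ((x + y) ^ (α - 1) * y) := by ring
      _ ≤ 2 * α * ((x + y) ^ (α - 1) * (x * y) ^ ((1:ℝ) / 2)) := by
          have h5 := mul_le_mul_of_nonneg_left e3 hp
          nlinarith
      _ ≤ (2 ^ α + 2 * α) * ((x + y) ^ (α - 1) * (x * y) ^ ((1:ℝ) / 2)) := by
          have : (0:ℝ) ≤ (x + y) ^ (α - 1) * (x * y) ^ ((1:ℝ) / 2) := by positivity
          nlinarith

lemma G_bound {α x y : ℝ} (hα : 0 < α) (hx : 0 ≤ x) (hy : 0 ≤ y) :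
    (x + y) ^ α - |x - y| ^ α ≤
      (2 ^ α + 2 * α) * ((x + y) ^ (α - min α 1) * (x * y) ^ (min α 1 / 2)) := by
  rcases le_total y x with h | h
  · exact G_bound_core hα hy h
  · have := G_bound_core hα hx h
    rwa [add_comm y x, abs_sub_comm y x, mul_comm y x] at this

lemma integrableOn_rpow_Ioc {r d : ℝ} (hr : -1 < r) (hd : 0 ≤ d) :
    IntegrableOn (fun t : ℝ => t ^ r) (Set.Ioc 0 d) := by
  have := intervalIntegral.intervalIntegrable_rpow' (a := 0) (b := d) hr
  rwa [intervalIntegrable_iff_integrableOn_Ioc_of_le hd] at this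

lemma G_cont {α A B : ℝ} (hα : 0 ≤ α) :
    Continuous fun q : ℝ × ℝ => (A * q.1 + B * q.2) ^ α - |A * q.1 - B * q.2| ^ α := by
  have c1 : Continuous fun q : ℝ × ℝ => A * q.1 + B * q.2 := by fun_prop
  have c2 : Continuous fun q : ℝ × ℝ => |A * q.1 - B * q.2| := by fun_prop
  exact (c1.rpow_const fun x => Or.inr hα).sub (c2.rpow_const fun x => Or.inr hα)

lemma G_meas {α A B : ℝ} (hα : 0 ≤ α) :
    Measurable (fun q : ℝ × ℝ =>
      ((A * q.1 + B * q.2) ^ α - |A * q.1 - B * q.2| ^ α) / (q.1 * q.2)) :=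
  (G_cont hα).measurable.div (measurable_fst.mul measurable_snd)


lemma sliceInt {α x d : ℝ} (hα : 0 < α) (hx : 0 < x) (hd : 0 ≤ d) :
    IntegrableOn (fun t => ((x + t) ^ α - |x - t| ^ α) / (x * t)) (Set.Ioc 0 d) := by
  have hp0 : 0 < min α 1 := lt_min hα one_pos
  have hpα : min α 1 ≤ α := min_le_left _ _
  have hCα : (0:ℝ) < 2 ^ α + 2 * α := by
    have : (0:ℝ) < 2 ^ α := Real.rpow_pos_of_pos (by norm_num) α
    linarith
  apply Integrable.mono'
    (g := fun t => ((2 ^ α + 2 * α) * (x + d) ^ (α - min α 1) * x ^ (min α 1 / 2 - 1)) *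
      t ^ (min α 1 / 2 - 1))
  · exact (integrableOn_rpow_Ioc (by linarith) hd).const_mul _
  · have c1 : Continuous fun t : ℝ => x + t := by fun_prop
    have c2 : Continuous fun t : ℝ => |x - t| := by fun_prop
    exact (((c1.rpow_const fun _ => Or.inr hα.le).sub
      (c2.rpow_const fun _ => Or.inr hα.le)).measurable.div
      (measurable_const.mul measurable_id)).aestronglyMeasurable
  · filter_upwards [ae_restrict_mem measurableSet_Ioc] with t ht
    obtain ⟨ht0, htd⟩ := ht
    have hGnn := G_nonneg hα hx.le ht0.le
    have hxt : 0 < x * t := by positivity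
    rw [Real.norm_eq_abs, abs_of_nonneg (div_nonneg hGnn hxt.le)]
    have h1 := G_bound hα hx.le ht0.le
    calc ((x + t) ^ α - |x - t| ^ α) / (x * t)
        ≤ ((2 ^ α + 2 * α) * ((x + t) ^ (α - min α 1) * (x * t) ^ (min α 1 / 2))) / (x * t) := by
          gcongr
      _ = (2 ^ α + 2 * α) * (x + t) ^ (α - min α 1) *
            (x ^ (min α 1 / 2 - 1) * t ^ (min α 1 / 2 - 1)) := by
          rw [← Real.mul_rpow hx.le ht0.le, Real.rpow_sub_one hxt.ne']
          field_simp
      _ ≤ (2 ^ α + 2 * α) * (x + d) ^ (α - min α 1) *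
            (x ^ (min α 1 / 2 - 1) * t ^ (min α 1 / 2 - 1)) := by
          have hb : (x + t) ^ (α - min α 1) ≤ (x + d) ^ (α - min α 1) :=
            Real.rpow_le_rpow (by positivity) (by linarith) (by linarith)
          have hnn : (0:ℝ) ≤ x ^ (min α 1 / 2 - 1) * t ^ (min α 1 / 2 - 1) := by
            positivity
          exact mul_le_mul_of_nonneg_right (mul_le_mul_of_nonneg_left hb hCα.le) hnn
      _ = ((2 ^ α + 2 * α) * (x + d) ^ (α - min α 1) * x ^ (min α 1 / 2 - 1)) *
            t ^ (min α 1 / 2 - 1) := by ring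

lemma prodInt {α A B c d : ℝ} (hα : 0 < α) (hA : 0 < A) (hB : 0 < B) (hc : 0 ≤ c) (hd : 0 ≤ d) :
    Integrable (fun q : ℝ × ℝ => ((A * q.1 + B * q.2) ^ α - |A * q.1 - B * q.2| ^ α) / (q.1 * q.2))
      ((volume.restrict (Set.Ioc 0 c)).prod (volume.restrict (Set.Ioc 0 d))) := by
  have hp0 : 0 < min α 1 := lt_min hα one_pos
  have hpα : min α 1 ≤ α := min_le_left _ _
  have hCα : (0:ℝ) < 2 ^ α + 2 * α := by
    have : (0:ℝ) < 2 ^ α := Real.rpow_pos_of_pos (by norm_num) α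
    linarith
  set K : ℝ := (2 ^ α + 2 * α) * (A * c + B * d) ^ (α - min α 1) * (A * B) ^ (min α 1 / 2)
    with hK
  have hKnn : 0 ≤ K := by positivity
  apply Integrable.mono'
    (g := fun q : ℝ × ℝ => (K * q.1 ^ (min α 1 / 2 - 1)) * q.2 ^ (min α 1 / 2 - 1))
  · exact ((integrableOn_rpow_Ioc (by linarith) hc).const_mul K).mul_prod
      (integrableOn_rpow_Ioc (by linarith) hd)
  · exact (G_meas hα.le).aestronglyMeasurable
  · rw [Measure.prod_restrict]
    filter_upwards [ae_restrict_mem (measurableSet_Ioc.prod measurableSet_Ioc)] with q hq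
    obtain ⟨⟨h10, h1c⟩, h20, h2d⟩ := hq
    have hx : 0 < A * q.1 := by positivity
    have hy : 0 < B * q.2 := by positivity
    have hGnn := G_nonneg hα hx.le hy.le
    have hq12 : 0 < q.1 * q.2 := by positivity
    rw [Real.norm_eq_abs, abs_of_nonneg (div_nonneg hGnn hq12.le)]
    have h1 := G_bound hα hx.le hy.le
    have hb : (A * q.1 + B * q.2) ^ (α - min α 1) ≤ (A * c + B * d) ^ (α - min α 1) := by
      apply Real.rpow_le_rpow (by positivity) _ (by linarith)
      have := mul_le_mul_of_nonneg_left h1c hA.le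
      have := mul_le_mul_of_nonneg_left h2d hB.le
      linarith
    have e1 : (A * q.1 * (B * q.2)) ^ (min α 1 / 2)
        = (A * B) ^ (min α 1 / 2) * (q.1 * q.2) ^ (min α 1 / 2) := by
      rw [← Real.mul_rpow (by positivity) (by positivity)]
      ring_nf
    calc ((A * q.1 + B * q.2) ^ α - |A * q.1 - B * q.2| ^ α) / (q.1 * q.2)
        ≤ ((2 ^ α + 2 * α) * ((A * q.1 + B * q.2) ^ (α - min α 1) *
            (A * q.1 * (B * q.2)) ^ (min α 1 / 2))) / (q.1 * q.2) := by gcongr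
      _ = ((2 ^ α + 2 * α) * (A * q.1 + B * q.2) ^ (α - min α 1) * (A * B) ^ (min α 1 / 2)) *
            (q.1 ^ (min α 1 / 2 - 1) * q.2 ^ (min α 1 / 2 - 1)) := by
          rw [e1, ← Real.mul_rpow h10.le h20.le, Real.rpow_sub_one hq12.ne']
          field_simp
      _ ≤ K * (q.1 ^ (min α 1 / 2 - 1) * q.2 ^ (min α 1 / 2 - 1)) := by
          have hnn : (0:ℝ) ≤ q.1 ^ (min α 1 / 2 - 1) * q.2 ^ (min α 1 / 2 - 1) := by positivity
          have hAB : (0:ℝ) ≤ (A * B) ^ (min α 1 / 2) := by positivity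
          apply mul_le_mul_of_nonneg_right _ hnn
          rw [hK]
          exact mul_le_mul_of_nonneg_right (mul_le_mul_of_nonneg_left hb hCα.le) hAB
      _ = (K * q.1 ^ (min α 1 / 2 - 1)) * q.2 ^ (min α 1 / 2 - 1) := by ring

lemma scale_int (f : ℝ → ℝ) {c : ℝ} (hc : 0 < c) :
    ∫ s in Set.Ioc (0:ℝ) 1, f (c * s) / s = ∫ t in Set.Ioc (0:ℝ) c, f t / t := by
  rw [← intervalIntegral.integral_of_le zero_le_one, ← intervalIntegral.integral_of_le hc.le]
  have e : ∀ s : ℝ, f (c * s) / s = c * ((fun t => f t / t) (c * s)) := by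
    intro s
    by_cases hs : s = 0
    · simp [hs]
    · field_simp
  calc ∫ s in (0:ℝ)..1, f (c * s) / s
      = ∫ s in (0:ℝ)..1, c * ((fun t => f t / t) (c * s)) := by simp_rw [e]
    _ = c * ∫ s in (0:ℝ)..1, (fun t => f t / t) (c * s) :=
        intervalIntegral.integral_const_mul c _
    _ = c * (c⁻¹ • ∫ t in (c * 0)..(c * 1), f t / t) := by
        exact congrArg (fun z => c * z)
          (intervalIntegral.integral_comp_mul_left (fun t => f t / t) hc.ne')
    _ = ∫ t in (0:ℝ)..c, f t / t := by
        rw [mul_zero, mul_one, smul_eq_mul, ← mul_assoc, mul_inv_cancel₀ hc.ne', one_mul]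

lemma rpow_int_eval {m α : ℝ} (hα : 0 < α) (hm : 0 ≤ m) :
    ∫ x in Set.Ioc (0:ℝ) m, x ^ (α - 1) = m ^ α / α := by
  rw [← intervalIntegral.integral_of_le hm, integral_rpow (Or.inl (by linarith))]
  have h1 : α - 1 + 1 = α := by ring
  rw [h1, Real.zero_rpow hα.ne']
  ring

lemma lower_tri_eval {α x : ℝ} (hα : 0 < α) (hx : 0 < x) :
    ∫ t in Set.Ioc (0:ℝ) x, ((x + t) ^ α - |x - t| ^ α) / (x * t)
      = x ^ (α - 1) * (∫ u in Set.Ioc (0:ℝ) 1, ((1 + u) ^ α - (1 - u) ^ α) / u) := by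
  have e1 : (fun t => ((x + t) ^ α - |x - t| ^ α) / (x * t))
      = fun t => (1 / x) * (((x + t) ^ α - |x - t| ^ α) / t) := by
    funext t
    ring
  rw [e1, MeasureTheory.integral_const_mul]
  have e2 := (scale_int (fun t => (x + t) ^ α - |x - t| ^ α) hx).symm
  rw [e2]
  have e3 : ∫ s in Set.Ioc (0:ℝ) 1, ((x + x * s) ^ α - |x - x * s| ^ α) / s
      = ∫ s in Set.Ioc (0:ℝ) 1, x ^ α * (((1 + s) ^ α - (1 - s) ^ α) / s) := by
    apply setIntegral_congr_fun measurableSet_Ioc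
    intro s hs
    obtain ⟨hs0, hs1⟩ := hs
    have h1 : x + x * s = x * (1 + s) := by ring
    have h2 : x - x * s = x * (1 - s) := by ring
    have h3 : |x - x * s| = x * (1 - s) := by
      rw [h2]; exact abs_of_nonneg (by nlinarith)
    simp only
    rw [h1, h3, Real.mul_rpow hx.le (by linarith), Real.mul_rpow hx.le (by linarith)]
    ring
  rw [e3, MeasureTheory.integral_const_mul, Real.rpow_sub_one hx.ne']
  ring

lemma D_symm {α x t : ℝ} : ((x + t) ^ α - |x - t| ^ α) / (x * t)
    = ((t + x) ^ α - |t - x| ^ α) / (t * x) := by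
  rw [add_comm, abs_sub_comm, mul_comm]

lemma K_eval {α m : ℝ} (hα : 0 < α) (hm : 0 < m) :
    (∫ x in Set.Ioc (0:ℝ) m, ∫ t in Set.Ioc (0:ℝ) m, ((x + t) ^ α - |x - t| ^ α) / (x * t))
      = 2 * (m ^ α / α) * ∫ u in Set.Ioc (0:ℝ) 1, ((1 + u) ^ α - (1 - u) ^ α) / u := by
  set J := ∫ u in Set.Ioc (0:ℝ) 1, ((1 + u) ^ α - (1 - u) ^ α) / u with hJ
  set D : ℝ → ℝ → ℝ := fun x t => ((x + t) ^ α - |x - t| ^ α) / (x * t) with hD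
  set W : ℝ × ℝ → ℝ := Set.indicator {q : ℝ × ℝ | q.1 < q.2} (fun q => D q.1 q.2) with hW
  have hWint : Integrable W
      ((volume.restrict (Set.Ioc 0 m)).prod (volume.restrict (Set.Ioc 0 m))) := by
    apply Integrable.indicator _ (measurableSet_lt measurable_fst measurable_snd)
    have := prodInt (A := 1) (B := 1) (c := m) (d := m) hα one_pos one_pos hm.le hm.le
    simpa [hD] using this
  have hsplit : ∀ x ∈ Set.Ioc (0:ℝ) m,
      (∫ t in Set.Ioc (0:ℝ) m, D x t)
        = x ^ (α - 1) * J + ∫ t in Set.Ioc (0:ℝ) m, W (x, t) := by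
    rintro x ⟨hx0, hxm⟩
    have hint : IntegrableOn (fun t => D x t) (Set.Ioc 0 m) := sliceInt hα hx0 hm.le
    have hunion : Set.Ioc (0:ℝ) m = Set.Ioc 0 x ∪ Set.Ioc x m :=
      (Set.Ioc_union_Ioc_eq_Ioc hx0.le hxm).symm
    rw [hunion, setIntegral_union (Set.Ioc_disjoint_Ioc_of_le le_rfl) measurableSet_Ioc
      (hint.mono_set (by rw [hunion]; exact Set.subset_union_left))
      (hint.mono_set (by rw [hunion]; exact Set.subset_union_right))]
    congr 1
    · exact lower_tri_eval hα hx0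
    · rw [← hunion]
      have ew : ∀ t : ℝ, W (x, t) = Set.indicator (Set.Ioi x) (fun t => D x t) t := by
        intro t; by_cases h : x < t <;> simp [hW, Set.indicator, h]
      simp_rw [ew]
      rw [setIntegral_indicator measurableSet_Ioi, Set.Ioc_inter_Ioi,
        max_eq_right hx0.le]
  have f1int : IntegrableOn (fun x : ℝ => x ^ (α - 1) * J) (Set.Ioc 0 m) :=
    (integrableOn_rpow_Ioc (by linarith) hm.le).mul_const J
  have f2int : Integrable (fun x => ∫ t in Set.Ioc (0:ℝ) m, W (x, t))
      (volume.restrict (Set.Ioc 0 m)) := hWint.integral_prod_left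
  have hswap : (∫ x in Set.Ioc (0:ℝ) m, ∫ t in Set.Ioc (0:ℝ) m, W (x, t))
      = ∫ t in Set.Ioc (0:ℝ) m, ∫ x in Set.Ioc (0:ℝ) m, W (x, t) :=
    integral_integral_swap (f := fun x t => W (x, t)) hWint
  have hinner2 : ∀ t ∈ Set.Ioc (0:ℝ) m,
      (∫ x in Set.Ioc (0:ℝ) m, W (x, t)) = t ^ (α - 1) * J := by
    rintro t ⟨ht0, htm⟩
    have ew2 : ∀ x : ℝ, W (x, t) = Set.indicator (Set.Iio t) (fun x => D x t) x := by
      intro x; by_cases h : x < t <;> simp [hW, Set.indicator, h]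
    simp_rw [ew2]
    rw [setIntegral_indicator measurableSet_Iio]
    have hset : Set.Ioc (0:ℝ) m ∩ Set.Iio t = Set.Ioo 0 t := by
      ext z
      simp only [Set.mem_inter_iff, Set.mem_Ioc, Set.mem_Iio, Set.mem_Ioo]
      constructor
      · rintro ⟨⟨h1, h2⟩, h3⟩; exact ⟨h1, h3⟩
      · rintro ⟨h1, h3⟩; exact ⟨⟨h1, le_trans h3.le htm⟩, h3⟩
    rw [hset, ← integral_Ioc_eq_integral_Ioo]
    have : ∀ x ∈ Set.Ioc (0:ℝ) t, D x t = D t x := by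
      intro x _; exact D_symm
    rw [setIntegral_congr_fun measurableSet_Ioc this]
    exact lower_tri_eval hα ht0
  calc (∫ x in Set.Ioc (0:ℝ) m, ∫ t in Set.Ioc (0:ℝ) m, D x t)
      = ∫ x in Set.Ioc (0:ℝ) m,
          (x ^ (α - 1) * J + ∫ t in Set.Ioc (0:ℝ) m, W (x, t)) :=
        setIntegral_congr_fun measurableSet_Ioc hsplit
    _ = (∫ x in Set.Ioc (0:ℝ) m, x ^ (α - 1) * J)
          + ∫ x in Set.Ioc (0:ℝ) m, ∫ t in Set.Ioc (0:ℝ) m, W (x, t) :=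
        integral_add f1int f2int
    _ = (m ^ α / α) * J + ∫ t in Set.Ioc (0:ℝ) m, ∫ x in Set.Ioc (0:ℝ) m, W (x, t) := by
        rw [hswap, MeasureTheory.integral_mul_const, rpow_int_eval hα hm.le]
    _ = (m ^ α / α) * J + ∫ t in Set.Ioc (0:ℝ) m, t ^ (α - 1) * J := by
        rw [setIntegral_congr_fun measurableSet_Ioc hinner2]
    _ = 2 * (m ^ α / α) * J := by
        rw [MeasureTheory.integral_mul_const, rpow_int_eval hα hm.le]
        ring

theorem stmt_3 (α a b : ℝ) (hα : 0 < α) (ha : 0 ≤ a) (hb : 0 ≤ b) :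
    (∫ s₁ in Set.Ioc (0:ℝ) 1, ∫ s₂ in Set.Ioc (0:ℝ) 1,
        ((a * s₁ + b * s₂) ^ α - |a * s₁ - b * s₂| ^ α) / (s₁ * s₂))
      ≥ (2 / α * ∫ u in Set.Ioc (0:ℝ) 1, ((1 + u) ^ α - (1 - u) ^ α) / u)
          * min (a ^ α) (b ^ α) := by
  set J := ∫ u in Set.Ioc (0:ℝ) 1, ((1 + u) ^ α - (1 - u) ^ α) / u with hJ
  have hLHS_nonneg : 0 ≤ ∫ s₁ in Set.Ioc (0:ℝ) 1, ∫ s₂ in Set.Ioc (0:ℝ) 1,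
      ((a * s₁ + b * s₂) ^ α - |a * s₁ - b * s₂| ^ α) / (s₁ * s₂) := by
    apply setIntegral_nonneg measurableSet_Ioc
    intro s₁ hs₁
    apply setIntegral_nonneg measurableSet_Ioc
    intro s₂ hs₂
    exact div_nonneg (G_nonneg hα (mul_nonneg ha hs₁.1.le) (mul_nonneg hb hs₂.1.le))
      (mul_nonneg hs₁.1.le hs₂.1.le)
  rcases eq_or_lt_of_le ha with ha0 | ha0
  · have : min (a ^ α) (b ^ α) = 0 := by
      rw [← ha0, Real.zero_rpow hα.ne']
      exact min_eq_left (Real.rpow_nonneg hb α)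
    rw [this, mul_zero]
    exact hLHS_nonneg
  rcases eq_or_lt_of_le hb with hb0 | hb0
  · have : min (a ^ α) (b ^ α) = 0 := by
      rw [← hb0, Real.zero_rpow hα.ne']
      exact min_eq_right (Real.rpow_nonneg ha α)
    rw [this, mul_zero]
    exact hLHS_nonneg
  -- main case
  set m := min a b with hm
  have hm0 : 0 < m := lt_min ha0 hb0
  have hma : m ≤ a := min_le_left _ _
  have hmb : m ≤ b := min_le_right _ _
  set D : ℝ → ℝ → ℝ := fun x t => ((x + t) ^ α - |x - t| ^ α) / (x * t) with hD
  set φ : ℝ → ℝ := fun x => ∫ t in Set.Ioc (0:ℝ) m, D x t with hφ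
  -- φ is integrable on Ioc 0 a
  have hφint : IntegrableOn φ (Set.Ioc 0 a) := by
    have := (prodInt (A := 1) (B := 1) (c := a) (d := m) hα one_pos one_pos ha0.le
      hm0.le).integral_prod_left
    simpa [hD, hφ, IntegrableOn] using this
  have hφnn : ∀ x : ℝ, 0 < x → 0 ≤ φ x := by
    intro x hx
    apply setIntegral_nonneg measurableSet_Ioc
    intro t ht
    exact div_nonneg (G_nonneg hα hx.le ht.1.le) (mul_nonneg hx.le ht.1.le)
  -- Step A: pointwise lower bound for the inner integral
  have hstepA : ∀ s₁ ∈ Set.Ioc (0:ℝ) 1,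
      a * φ (a * s₁) ≤ ∫ s₂ in Set.Ioc (0:ℝ) 1,
        ((a * s₁ + b * s₂) ^ α - |a * s₁ - b * s₂| ^ α) / (s₁ * s₂) := by
    rintro s₁ ⟨hs₁0, hs₁1⟩
    set x := a * s₁ with hx
    have hx0 : 0 < x := by positivity
    have e1 : (fun s₂ => ((a * s₁ + b * s₂) ^ α - |a * s₁ - b * s₂| ^ α) / (s₁ * s₂))
        = fun s₂ => (1 / s₁) * (((x + b * s₂) ^ α - |x - b * s₂| ^ α) / s₂) := by
      funext s₂
      rw [hx]
      ring
    rw [e1, MeasureTheory.integral_const_mul,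
      scale_int (fun t => (x + t) ^ α - |x - t| ^ α) hb0]
    have hDid : (fun t => ((x + t) ^ α - |x - t| ^ α) / t) = fun t => x * D x t := by
      funext t
      by_cases ht : t = 0
      · simp [hD, ht]
      · rw [hD]
        field_simp
    have hintb : IntegrableOn (fun t => ((x + t) ^ α - |x - t| ^ α) / t) (Set.Ioc 0 b) := by
      rw [hDid]
      exact (sliceInt hα hx0 hb0.le).const_mul x
    have hmono : (∫ t in Set.Ioc (0:ℝ) m, ((x + t) ^ α - |x - t| ^ α) / t)
        ≤ ∫ t in Set.Ioc (0:ℝ) b, ((x + t) ^ α - |x - t| ^ α) / t := by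
      apply setIntegral_mono_set hintb
      · filter_upwards [ae_restrict_mem measurableSet_Ioc] with t ht
        exact div_nonneg (G_nonneg hα hx0.le ht.1.le) ht.1.le
      · exact (Set.Ioc_subset_Ioc_right hmb).eventuallyLE
    have e2 : (∫ t in Set.Ioc (0:ℝ) m, ((x + t) ^ α - |x - t| ^ α) / t) = x * φ x := by
      rw [hDid, MeasureTheory.integral_const_mul, hφ]
    calc a * φ (a * s₁) = (1 / s₁) * (x * φ x) := by
          rw [← hx]
          field_simp
          ring
      _ = (1 / s₁) * ∫ t in Set.Ioc (0:ℝ) m, ((x + t) ^ α - |x - t| ^ α) / t := by rw [e2]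
      _ ≤ (1 / s₁) * ∫ t in Set.Ioc (0:ℝ) b, ((x + t) ^ α - |x - t| ^ α) / t :=
          mul_le_mul_of_nonneg_left hmono (by positivity)
  -- Step B: integrate the bound
  have hbig : IntegrableOn (fun s₁ => ∫ s₂ in Set.Ioc (0:ℝ) 1,
      ((a * s₁ + b * s₂) ^ α - |a * s₁ - b * s₂| ^ α) / (s₁ * s₂)) (Set.Ioc 0 1) := by
    have := (prodInt (A := a) (B := b) (c := 1) (d := 1) hα ha0 hb0 zero_le_one
      zero_le_one).integral_prod_left
    exact this
  have hsmall : IntegrableOn (fun s₁ => a * φ (a * s₁)) (Set.Ioc 0 1) := by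
    have h1 : IntervalIntegrable φ volume 0 a :=
      (intervalIntegrable_iff_integrableOn_Ioc_of_le ha0.le).mpr hφint
    have h2 := h1.comp_mul_left (c := a)
    rw [zero_div, div_self ha0.ne'] at h2
    exact ((intervalIntegrable_iff_integrableOn_Ioc_of_le zero_le_one).mp h2).const_mul a
  have hB : (∫ s₁ in Set.Ioc (0:ℝ) 1, a * φ (a * s₁))
      ≤ ∫ s₁ in Set.Ioc (0:ℝ) 1, ∫ s₂ in Set.Ioc (0:ℝ) 1,
        ((a * s₁ + b * s₂) ^ α - |a * s₁ - b * s₂| ^ α) / (s₁ * s₂) :=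
    setIntegral_mono_on hsmall hbig measurableSet_Ioc hstepA
  -- Step C: change of variables for the outer integral
  have hC : (∫ s₁ in Set.Ioc (0:ℝ) 1, a * φ (a * s₁)) = ∫ x in Set.Ioc (0:ℝ) a, φ x := by
    have e3 : ∀ s₁ ∈ Set.Ioc (0:ℝ) 1,
        a * φ (a * s₁) = (fun x => x * φ x) (a * s₁) / s₁ := by
      rintro s₁ ⟨hs₁0, _⟩
      field_simp
    rw [setIntegral_congr_fun measurableSet_Ioc e3, scale_int (fun x => x * φ x) ha0]
    apply setIntegral_congr_fun measurableSet_Ioc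
    rintro x ⟨hx0, _⟩
    field_simp
  -- Step D: shrink domain
  have hDstep : (∫ x in Set.Ioc (0:ℝ) m, φ x) ≤ ∫ x in Set.Ioc (0:ℝ) a, φ x := by
    apply setIntegral_mono_set hφint
    · filter_upwards [ae_restrict_mem measurableSet_Ioc] with x hx
      exact hφnn x hx.1
    · exact (Set.Ioc_subset_Ioc_right hma).eventuallyLE
  -- Step E: evaluate
  have hE : (∫ x in Set.Ioc (0:ℝ) m, φ x) = 2 * (m ^ α / α) * J := K_eval hα hm0
  -- Step F: identify the RHS
  have hF : (2 / α * J) * min (a ^ α) (b ^ α) = 2 * (m ^ α / α) * J := by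
    have : min (a ^ α) (b ^ α) = m ^ α := by
      rcases le_total a b with h | h
      · rw [hm, min_eq_left h, min_eq_left (Real.rpow_le_rpow ha h hα.le)]
      · rw [hm, min_eq_right h, min_eq_right (Real.rpow_le_rpow hb h hα.le)]
    rw [this]
    ring
  rw [ge_iff_le, hF]
  calc 2 * (m ^ α / α) * J = ∫ x in Set.Ioc (0:ℝ) m, φ x := hE.symm
    _ ≤ ∫ x in Set.Ioc (0:ℝ) a, φ x := hDstep
    _ = ∫ s₁ in Set.Ioc (0:ℝ) 1, a * φ (a * s₁) := hC.symm
    _ ≤ _ := hB
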